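/- Let α > 0 with α ≠ 1. Let p(θ, D) be a positive joint density over parameters θ (for a fixed dataset D), let p(D) = ∫ p(θ, D) dθ ∈ (0, ∞) be the marginal likelihood, and let p(θ|D) = p(θ, D)/p(D) be the posterior density. Let q be a positive probability density over θ such that E_{θ∼q}[(p(θ, D)/q(θ))^{1−α}] ∈ (0, ∞). Then the variational Rényi bound satisfies L_α(q; D) := (1/(1−α))·log E_{θ∼q}[(p(θ, D)/q(θ))^{1−α}] = log p(D) − D_α(q‖p(·|D)). -/

import Mathlib

open MeasureTheory

/-- **The variational Rényi (VR) bound identity.**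
Let `α > 0`, `α ≠ 1`.  Let `pjoint θ = p(θ, D)` be a positive joint density over
parameters `θ` (for a fixed dataset `D`), `pD = ∫ pjoint θ dμ(θ) ∈ (0,∞)` the marginal
likelihood, and `p(θ|D) = pjoint θ / pD` the posterior.  For a positive probability
density `q` with `E_{θ∼q}[(pjoint θ / q θ)^(1-α)] ∈ (0,∞)`, the VR bound satisfies
`L_α(q; D) = (1/(1-α)) log E_{θ∼q}[(p(θ,D)/q(θ))^(1-α)] = log p(D) - D_α(q ‖ p(·|D))`,
where `D_α(q‖p) = (1/(α-1)) log ∫ q(θ)^α p(θ)^(1-α) dθ` is Rényi's α-divergence. -/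
theorem vr_bound_eq_log_evidence_sub_renyi
    {Θ : Type*} [MeasurableSpace Θ] (μ : Measure Θ)
    (α : ℝ) (hα_pos : 0 < α) (hα_ne : α ≠ 1)
    (pjoint q : Θ → ℝ) (pD : ℝ)
    (hpj_pos : ∀ θ, 0 < pjoint θ)
    (hpD_def : pD = ∫ θ, pjoint θ ∂μ)
    (hpD_pos : 0 < pD)
    (hq_pos : ∀ θ, 0 < q θ)
    (hq_prob : ∫ θ, q θ ∂μ = 1)
    (hq_meas : AEMeasurable q μ) (hpj_meas : AEMeasurable pjoint μ)
    -- `E_{θ∼q}[(pjoint θ / q θ)^(1-α)] ∈ (0, ∞)`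
    (hE_int : Integrable (fun θ => q θ * (pjoint θ / q θ) ^ (1 - α)) μ)
    (hE_pos : 0 < ∫ θ, q θ * (pjoint θ / q θ) ^ (1 - α) ∂μ) :
    (1 / (1 - α)) * Real.log (∫ θ, q θ * (pjoint θ / q θ) ^ (1 - α) ∂μ)
      = Real.log pD
        - (1 / (α - 1)) * Real.log (∫ θ, q θ ^ α * (pjoint θ / pD) ^ (1 - α) ∂μ) := by
  set E := ∫ θ, q θ * (pjoint θ / q θ) ^ (1 - α) ∂μ with hE
  have hpt : ∀ θ, q θ ^ α * (pjoint θ / pD) ^ (1 - α)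
      = q θ * (pjoint θ / q θ) ^ (1 - α) * pD ^ (α - 1) := by
    intro θ
    have hq := hq_pos θ
    have hp := hpj_pos θ
    rw [Real.div_rpow hp.le hpD_pos.le, Real.div_rpow hp.le hq.le]
    have h1 : q θ ^ α * q θ ^ (1 - α) = q θ := by
      rw [← Real.rpow_add hq]; norm_num
    have h2 : (pD : ℝ) ^ (α - 1) * pD ^ (1 - α) = 1 := by
      rw [← Real.rpow_add hpD_pos]; norm_num
    have hqne := (Real.rpow_pos_of_pos hq (1 - α)).ne'
    have hpDne := (Real.rpow_pos_of_pos hpD_pos (1 - α)).ne'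
    field_simp
    linear_combination h1 - q θ * h2
  have hint : (∫ θ, q θ ^ α * (pjoint θ / pD) ^ (1 - α) ∂μ) = E * pD ^ (α - 1) := by
    calc (∫ θ, q θ ^ α * (pjoint θ / pD) ^ (1 - α) ∂μ)
        = ∫ θ, q θ * (pjoint θ / q θ) ^ (1 - α) * pD ^ (α - 1) ∂μ := by
          exact integral_congr_ae (Filter.Eventually.of_forall hpt)
      _ = E * pD ^ (α - 1) := by rw [integral_mul_const]
  rw [hint, Real.log_mul (ne_of_gt hE_pos)
      (Real.rpow_pos_of_pos hpD_pos _).ne', Real.log_rpow hpD_pos]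
  have hα1 : (1 : ℝ) - α ≠ 0 := sub_ne_zero.mpr (Ne.symm hα_ne)
  have hα2 : α - 1 ≠ 0 := sub_ne_zero.mpr hα_ne
  field_simp
  linear_combination (α - 1) * Real.log E
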